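/- For coprime positive integers a and b, the number 2b·gcd(3,b)·s(a;b) is an integer. -/

import Mathlib

open Finset Real

/-- The classical Dedekind sum `s(a;b)` defined by the cotangent sum. -/
noncomputable def dedekindS (a : ℤ) (b : ℕ) : ℝ :=
  (1 / (4 * (b : ℝ))) * ∑ ν ∈ Finset.Ico 1 b,
    Real.cot (Real.pi * a * ν / b) * Real.cot (Real.pi * ν / b)

namespace DedekindSumAux


lemma six_mul_sum_sq (n : ℕ) :
    6 * ∑ i ∈ Finset.range n, (i : ℤ)^2 = n * (n - 1) * (2 * n - 1) := by
  induction n with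
  | zero => simp
  | succ n ih =>
    rw [Finset.sum_range_succ]; push_cast; push_cast at ih; linear_combination ih

lemma sum_Ico_one {M : Type*} [AddCommMonoid M] (b : ℕ) (hb : 0 < b) (f : ℕ → M) :
    ∑ i ∈ Finset.range b, f i = f 0 + ∑ i ∈ Finset.Ico 1 b, f i := by
  rw [Finset.range_eq_Ico, ← Finset.sum_eq_sum_Ico_succ_bot hb]

lemma three_dvd (b : ℕ) : (3:ℤ) ∣ (Nat.gcd 3 b : ℤ) * ((b:ℤ) - 1) * (2 * b - 1) := by
  by_cases h : 3 ∣ b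
  · rw [Nat.gcd_eq_left h]
    exact Dvd.dvd.mul_right (Dvd.dvd.mul_right (by norm_num) _) _
  · have h2 : b % 3 = 1 ∨ b % 3 = 2 := by omega
    rcases h2 with h2 | h2
    · have : (3:ℤ) ∣ ((b:ℤ) - 1) := by omega
      exact Dvd.dvd.mul_right (Dvd.dvd.mul_left this _) _
    · have : (3:ℤ) ∣ (2 * (b:ℤ) - 1) := by omega
      exact Dvd.dvd.mul_left this _

lemma dvd_key (a b : ℕ) (hb : 0 < b) :
    (b:ℤ) ∣ 2 * (Nat.gcd 3 b : ℤ) * ∑ ν ∈ Finset.Ico 1 b, (ν : ℤ) * ((a * ν) % b : ℕ) := by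
  set g : ℤ := (Nat.gcd 3 b : ℤ) with hg
  -- step 1 : sum ≡ a * ∑ ν² mod b
  have h1 : (b:ℤ) ∣ (∑ ν ∈ Finset.Ico 1 b, (ν : ℤ) * ((a * ν) % b : ℕ))
      - a * ∑ ν ∈ Finset.Ico 1 b, (ν:ℤ)^2 := by
    rw [Finset.mul_sum, ← Finset.sum_sub_distrib]
    apply Finset.dvd_sum
    intro ν _
    have hc : ((a * ν % b : ℕ) : ℤ) = (a * ν : ℤ) % b := by push_cast; ring
    rw [hc, Int.emod_def]
    exact ⟨-(ν * ((a*ν : ℤ)/b)), by push_cast; ring⟩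
  -- step 2 : b ∣ 2 g a ∑ ν²
  have hIco : ∑ ν ∈ Finset.Ico 1 b, (ν:ℤ)^2 = ∑ i ∈ Finset.range b, (i:ℤ)^2 := by
    rw [sum_Ico_one b hb (fun i => (i:ℤ)^2)]; norm_num
  obtain ⟨t, ht⟩ := three_dvd b
  have h2 : 2 * g * ((a:ℤ) * ∑ ν ∈ Finset.Ico 1 b, (ν:ℤ)^2) = (b:ℤ) * (a * t) := by
    have h6 := six_mul_sum_sq b
    apply mul_left_cancel₀ (show (6:ℤ) ≠ 0 by norm_num)
    rw [hIco]
    linear_combination 2 * (a:ℤ) * g * h6 + 2 * (a:ℤ) * (b:ℤ) * ht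
  obtain ⟨s, hs⟩ := h1
  exact ⟨2 * g * s + a * t, by linear_combination 2 * g * hs + h2⟩


noncomputable def zet (b : ℕ) : ℂ := Complex.exp (2 * Real.pi * Complex.I / b)

lemma zet_pow_eq_one_iff {b : ℕ} (hb : 0 < b) (m : ℕ) : zet b ^ m = 1 ↔ b ∣ m :=
  (Complex.isPrimitiveRoot_exp b hb.ne').pow_eq_one_iff_dvd m

lemma zet_pow_b {b : ℕ} (hb : 0 < b) : zet b ^ b = 1 :=
  (zet_pow_eq_one_iff hb b).mpr dvd_rfl

lemma cot_eq {b : ℕ} (hb : 0 < b) {m : ℕ} (hm : ¬ b ∣ m) :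
    ((Real.cot (Real.pi * m / b) : ℝ) : ℂ)
      = Complex.I * (zet b ^ m + 1) / (zet b ^ m - 1) := by
  have hbR : (b:ℝ) ≠ 0 := Nat.cast_ne_zero.mpr hb.ne'
  have hsin : Real.sin (Real.pi * m / b) ≠ 0 := by
    rw [Real.sin_ne_zero_iff]
    intro n hn
    apply hm
    have hnb : (n : ℝ) * b = m := by
      have hπ := Real.pi_ne_zero
      field_simp at hn
      have h2 : Real.pi * ((n:ℝ) * b) = Real.pi * m := by linear_combination Real.pi * hn
      exact mul_left_cancel₀ hπ h2
    have : ((n * b : ℤ) : ℝ) = ((m : ℕ) : ℝ) := by push_cast; linarith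
    have h' : (n * (b:ℤ)) = (m:ℤ) := by exact_mod_cast this
    have : (b:ℤ) ∣ (m:ℤ) := ⟨n, by linarith⟩
    exact_mod_cast this
  have hden : zet b ^ m - 1 ≠ 0 :=
    sub_ne_zero.mpr (fun h => hm ((zet_pow_eq_one_iff hb m).mp h))
  set θ : ℂ := (Real.pi : ℂ) * m / b with hθ
  have hθr : ((Real.pi * m / b : ℝ) : ℂ) = θ := by push_cast; ring
  set E : ℂ := Complex.exp (θ * Complex.I) with hE
  have hEne : E ≠ 0 := Complex.exp_ne_zero _
  have hEsq : E ^ 2 = zet b ^ m := by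
    rw [hE, ← Complex.exp_nat_mul]
    rw [zet, ← Complex.exp_nat_mul]
    congr 1
    push_cast
    ring
  have hsinC : Complex.sin θ ≠ 0 := by
    rw [← hθr, ← Complex.ofReal_sin]
    exact_mod_cast hsin
  have hcos : Complex.cos θ = (E + E⁻¹) / 2 := by
    have h := Complex.two_cos θ
    rw [neg_mul, Complex.exp_neg] at h
    rw [hE]
    linear_combination h / 2
  have hsin2 : Complex.sin θ = (E⁻¹ - E) * Complex.I / 2 := by
    have h := Complex.two_sin θ
    rw [neg_mul, Complex.exp_neg] at h
    rw [hE]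
    linear_combination h / 2
  have hden2 : E ^ 2 - 1 ≠ 0 := by rw [hEsq]; exact hden
  rw [Real.cot_eq_cos_div_sin, Complex.ofReal_div, Complex.ofReal_cos, Complex.ofReal_sin, hθr,
    ← hEsq]
  rw [hsin2] at hsinC
  rw [hcos, hsin2]
  rw [div_eq_div_iff hsinC hden2]
  field_simp
  linear_combination (E ^ 4 - 1) * Complex.I_sq

lemma sum_Ico_one' {M : Type*} [AddCommMonoid M] (b : ℕ) (hb : 0 < b) (f : ℕ → M) :
    ∑ i ∈ Finset.range b, f i = f 0 + ∑ i ∈ Finset.Ico 1 b, f i := by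
  rw [Finset.range_eq_Ico, ← Finset.sum_eq_sum_Ico_succ_bot hb]

lemma geom' {b : ℕ} (hb : 0 < b) (m : ℕ) :
    ∑ k ∈ Finset.range b, (zet b ^ m) ^ k = if b ∣ m then (b:ℂ) else 0 := by
  by_cases h : b ∣ m
  · rw [if_pos h, (zet_pow_eq_one_iff hb m).mpr h]
    simp
  · rw [if_neg h, geom_sum_eq (fun h1 => h ((zet_pow_eq_one_iff hb m).mp h1))]
    rw [← pow_mul, mul_comm, pow_mul, zet_pow_b hb, one_pow, sub_self, zero_div]

lemma sum_mul_geom (x : ℂ) (n : ℕ) :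
    (x - 1) * ∑ k ∈ Finset.range n, (k:ℂ) * x ^ k
      = n * x ^ n - x ^ n - (∑ k ∈ Finset.range n, x ^ k) + 1 := by
  induction n with
  | zero => simp
  | succ n ih =>
    rw [Finset.sum_range_succ, Finset.sum_range_succ]
    push_cast
    linear_combination ih

lemma F_eq {b : ℕ} (hb : 0 < b) {m : ℕ} (hm : ¬ b ∣ m) :
    ∑ ν ∈ Finset.Ico 1 b, ((ν:ℂ)/b - 1/2) * (zet b ^ m) ^ ν
      = (zet b ^ m + 1) / (2 * (zet b ^ m - 1)) := by
  have hbC : (b:ℂ) ≠ 0 := Nat.cast_ne_zero.mpr hb.ne'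
  set x : ℂ := zet b ^ m with hx
  have hx1 : x - 1 ≠ 0 := sub_ne_zero.mpr (fun h => hm ((zet_pow_eq_one_iff hb m).mp h))
  have hxb : x ^ b = 1 := by rw [hx, ← pow_mul, mul_comm, pow_mul, zet_pow_b hb, one_pow]
  have hgeom : ∑ k ∈ Finset.range b, x ^ k = 0 := by
    rw [hx, geom' hb m, if_neg hm]
  have hIgeom : ∑ k ∈ Finset.Ico 1 b, x ^ k = -1 := by
    have h := sum_Ico_one' b hb (fun k => x ^ k)
    rw [hgeom] at h
    simp only [pow_zero] at h
    linear_combination -h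
  have hk : (x - 1) * ∑ k ∈ Finset.Ico 1 b, (k:ℂ) * x ^ k = b := by
    have h1 := sum_mul_geom x b
    have h2 := sum_Ico_one' b hb (fun k => (k:ℂ) * x ^ k)
    simp only [Nat.cast_zero, zero_mul, zero_add] at h2
    rw [← h2, h1, hxb, hgeom]
    ring
  have split : ∑ ν ∈ Finset.Ico 1 b, ((ν:ℂ)/b - 1/2) * x ^ ν
      = (1/b) * (∑ ν ∈ Finset.Ico 1 b, (ν:ℂ) * x ^ ν)
        - (1/2) * (∑ ν ∈ Finset.Ico 1 b, x ^ ν) := by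
    rw [Finset.mul_sum, Finset.mul_sum, ← Finset.sum_sub_distrib]
    apply Finset.sum_congr rfl
    intro ν _
    field_simp
  rw [split, hIgeom]
  have hkk : ∑ k ∈ Finset.Ico 1 b, (k:ℂ) * x ^ k = b / (x - 1) := by
    rw [eq_div_iff hx1]
    linear_combination hk
  rw [hkk]
  field_simp
  ring

lemma sum_f_zero {b : ℕ} (hb : 0 < b) :
    ∑ ν ∈ Finset.Ico 1 b, ((ν:ℂ)/b - 1/2) = 0 := by
  have hbC : (b:ℂ) ≠ 0 := Nat.cast_ne_zero.mpr hb.ne'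
  have hg : (∑ ν ∈ Finset.Ico 1 b, (ν:ℕ)) * 2 = b * (b - 1) := by
    have h0 := sum_Ico_one' b hb (fun i => i)
    simp only [zero_add] at h0
    rw [← h0, Finset.sum_range_id_mul_two]
  have hgC : (∑ ν ∈ Finset.Ico 1 b, (ν:ℂ)) * 2 = (b:ℂ) * ((b:ℂ) - 1) := by
    have := congrArg (fun n : ℕ => (n:ℂ)) hg
    push_cast at this
    rw [Nat.cast_sub hb] at this
    push_cast at this
    convert this using 2
  rw [Finset.sum_sub_distrib, Finset.sum_const, Nat.card_Ico]
  have hcard : ((b - 1 : ℕ) : ℂ) = (b:ℂ) - 1 := by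
    rw [Nat.cast_sub hb]; norm_num
  rw [nsmul_eq_mul, hcard, ← Finset.sum_div]
  have : (∑ ν ∈ Finset.Ico 1 b, (ν:ℂ)) = (b:ℂ) * ((b:ℂ) - 1) / 2 := by
    linear_combination hgC / 2
  rw [this]
  field_simp
  ring

lemma dd_inner_sum {a b : ℕ} (hb : 0 < b) (hcop : Nat.gcd a b = 1) {ν : ℕ}
    (hν : ν ∈ Finset.Ico 1 b) :
    ∑ μ ∈ Finset.Ico 1 b, ((μ:ℂ)/b - 1/2) * (if b ∣ a * ν + μ then (b:ℂ) else 0)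
      = (b:ℂ) * (1/2 - ((a * ν % b : ℕ):ℂ)/b) := by
  rw [Finset.mem_Ico] at hν
  have hbC : (b:ℂ) ≠ 0 := Nat.cast_ne_zero.mpr hb.ne'
  set r : ℕ := a * ν % b with hr
  have hnd : ¬ b ∣ a * ν := by
    intro h
    have h2 : b ∣ ν := Nat.Coprime.dvd_of_dvd_mul_left (Nat.Coprime.symm hcop) h
    exact absurd (Nat.le_of_dvd (by omega) h2) (by omega)
  have hr0 : 0 < r := Nat.pos_of_ne_zero (fun h => hnd (Nat.dvd_of_mod_eq_zero h))
  have hrb : r < b := Nat.mod_lt _ hb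
  have hdiv : a * ν = b * (a * ν / b) + r := (Nat.div_add_mod (a*ν) b).symm
  rw [Finset.sum_eq_single_of_mem (b - r) (Finset.mem_Ico.mpr ⟨by omega, by omega⟩)]
  · rw [if_pos ⟨a * ν / b + 1, by rw [Nat.mul_succ]; omega⟩]
    have hc : ((b - r : ℕ):ℂ) = (b:ℂ) - (r:ℂ) := by rw [Nat.cast_sub hrb.le]
    rw [hc]
    field_simp
    ring
  · intro μ hμ hne
    rw [Finset.mem_Ico] at hμ
    rw [if_neg, mul_zero]
    intro hdvd
    have h1 : b ∣ r + μ := by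
      have heq : r + μ = (a * ν + μ) - b * (a * ν / b) := by omega
      rw [heq]
      exact Nat.dvd_sub hdvd ⟨_, rfl⟩
    have h2 : b ≤ r + μ := Nat.le_of_dvd (by omega) h1
    have h3 : b ∣ (r + μ - b) := Nat.dvd_sub h1 dvd_rfl
    have h4 : r + μ - b = 0 := by
      rcases Nat.eq_zero_or_pos (r + μ - b) with h | h
      · exact h
      · exact absurd (Nat.le_of_dvd h h3) (by omega)
    exact hne (by omega)

lemma cot_sum_eq (a b : ℕ) (ha : 0 < a) (hb : 0 < b) (hcop : Nat.gcd a b = 1) :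
    ∑ ν ∈ Finset.Ico 1 b, Real.cot (Real.pi * a * ν / b) * Real.cot (Real.pi * ν / b)
      = 4 * b * ∑ ν ∈ Finset.Ico 1 b, (((a * ν % b : ℕ):ℝ)/b - 1/2) * ((ν:ℝ)/b - 1/2) := by
  have hbC : (b:ℂ) ≠ 0 := Nat.cast_ne_zero.mpr hb.ne'
  have hndvd : ∀ k ∈ Finset.Ico 1 b, ¬ b ∣ k := by
    intro k hk h
    rw [Finset.mem_Ico] at hk
    exact absurd (Nat.le_of_dvd (by omega) h) (by omega)
  have hndvda : ∀ k ∈ Finset.Ico 1 b, ¬ b ∣ a * k := by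
    intro k hk h
    exact hndvd k hk (Nat.Coprime.dvd_of_dvd_mul_left (Nat.Coprime.symm hcop) h)
  apply Complex.ofReal_injective
  push_cast [-Complex.ofReal_cot]
  have hkgeom : ∀ m : ℕ, ∑ k ∈ Finset.Ico 1 b, (zet b ^ m) ^ k
      = (if b ∣ m then (b:ℂ) else 0) - 1 := by
    intro m
    have h := sum_Ico_one' b hb (fun k => (zet b ^ m) ^ k)
    rw [geom' hb m] at h
    simp only [pow_zero] at h
    linear_combination -h
  have step1 : ∀ k ∈ Finset.Ico 1 b,
      ((Real.cot (Real.pi * a * k / b) : ℝ) : ℂ) * ((Real.cot (Real.pi * k / b) : ℝ) : ℂ)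
        = (-4) * ((∑ ν ∈ Finset.Ico 1 b, ((ν:ℂ)/b - 1/2) * (zet b ^ (a*k)) ^ ν)
            * (∑ μ ∈ Finset.Ico 1 b, ((μ:ℂ)/b - 1/2) * (zet b ^ k) ^ μ)) := by
    intro k hk
    have h1 := hndvd k hk
    have h2 := hndvda k hk
    have harg : Real.pi * a * k / b = Real.pi * ((a*k : ℕ):ℝ) / b := by push_cast; ring
    rw [harg, cot_eq hb h2, cot_eq hb h1, F_eq hb h2, F_eq hb h1]
    have d1 : zet b ^ (a*k) - 1 ≠ 0 :=
      sub_ne_zero.mpr (fun h => h2 ((zet_pow_eq_one_iff hb _).mp h))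
    have d2 : zet b ^ k - 1 ≠ 0 :=
      sub_ne_zero.mpr (fun h => h1 ((zet_pow_eq_one_iff hb _).mp h))
    field_simp
    linear_combination (4*(zet b^(a*k) + zet b^(a*k)*zet b^k + zet b^k
      + 1)) * Complex.I_sq
  have step2 : ∀ k ∈ Finset.Ico 1 b,
      (-4 : ℂ) * ((∑ ν ∈ Finset.Ico 1 b, ((ν:ℂ)/b - 1/2) * (zet b ^ (a*k)) ^ ν)
          * (∑ μ ∈ Finset.Ico 1 b, ((μ:ℂ)/b - 1/2) * (zet b ^ k) ^ μ))
        = (-4) * ∑ ν ∈ Finset.Ico 1 b, ∑ μ ∈ Finset.Ico 1 b,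
            (((ν:ℂ)/b - 1/2) * ((μ:ℂ)/b - 1/2)) * (zet b ^ (a*ν+μ)) ^ k := by
    intro k hk
    congr 1
    rw [Finset.sum_mul_sum]
    refine Finset.sum_congr rfl fun ν _ => Finset.sum_congr rfl fun μ _ => ?_
    have hexp : (zet b ^ (a*k)) ^ ν * (zet b ^ k) ^ μ = (zet b ^ (a*ν+μ)) ^ k := by
      rw [← pow_mul, ← pow_mul, ← pow_add, ← pow_mul]
      congr 1
      ring
    calc ((ν:ℂ)/b - 1/2) * (zet b ^ (a*k)) ^ ν * (((μ:ℂ)/b - 1/2) * (zet b ^ k) ^ μ)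
        = (((ν:ℂ)/b - 1/2) * ((μ:ℂ)/b - 1/2))
            * ((zet b ^ (a*k)) ^ ν * (zet b ^ k) ^ μ) := by ring
      _ = (((ν:ℂ)/b - 1/2) * ((μ:ℂ)/b - 1/2)) * (zet b ^ (a*ν+μ)) ^ k := by rw [hexp]
  rw [Finset.sum_congr rfl step1, Finset.sum_congr rfl step2, ← Finset.mul_sum]
  have swap : ∑ k ∈ Finset.Ico 1 b, ∑ ν ∈ Finset.Ico 1 b, ∑ μ ∈ Finset.Ico 1 b,
        (((ν:ℂ)/b - 1/2) * ((μ:ℂ)/b - 1/2)) * (zet b ^ (a*ν+μ)) ^ k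
      = ∑ ν ∈ Finset.Ico 1 b, ((ν:ℂ)/b - 1/2) * ((b:ℂ) * (1/2 - ((a * ν % b : ℕ):ℂ)/b)) := by
    rw [Finset.sum_comm]
    refine Finset.sum_congr rfl fun ν hν => ?_
    rw [Finset.sum_comm]
    have hinner : ∀ μ ∈ Finset.Ico 1 b, ∑ k ∈ Finset.Ico 1 b,
        (((ν:ℂ)/b - 1/2) * ((μ:ℂ)/b - 1/2)) * (zet b ^ (a*ν+μ)) ^ k
        = (((ν:ℂ)/b - 1/2) * ((μ:ℂ)/b - 1/2)) * ((if b ∣ a*ν+μ then (b:ℂ) else 0) - 1) := by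
      intro μ _
      rw [← Finset.mul_sum, hkgeom]
    rw [Finset.sum_congr rfl hinner]
    have expand : ∑ μ ∈ Finset.Ico 1 b,
        (((ν:ℂ)/b - 1/2) * ((μ:ℂ)/b - 1/2)) * ((if b ∣ a*ν+μ then (b:ℂ) else 0) - 1)
        = ((ν:ℂ)/b - 1/2) * (∑ μ ∈ Finset.Ico 1 b,
            ((μ:ℂ)/b - 1/2) * (if b ∣ a*ν+μ then (b:ℂ) else 0))
          - ((ν:ℂ)/b - 1/2) * (∑ μ ∈ Finset.Ico 1 b, ((μ:ℂ)/b - 1/2)) := by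
      rw [Finset.mul_sum, Finset.mul_sum, ← Finset.sum_sub_distrib]
      exact Finset.sum_congr rfl fun μ _ => by ring
    rw [expand, sum_f_zero hb, dd_inner_sum hb hcop hν, mul_zero, sub_zero]
  rw [swap, Finset.mul_sum, Finset.mul_sum]
  exact Finset.sum_congr rfl fun ν _ => by ring

end DedekindSumAux

open DedekindSumAux in
theorem dedekindS_denominator (a b : ℕ) (ha : 0 < a) (hb : 0 < b) (hcop : Nat.gcd a b = 1) :
    ∃ z : ℤ, (2 * (b : ℝ) * (Nat.gcd 3 b : ℝ)) * dedekindS a b = (z : ℝ) := by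
  have hbR : (b:ℝ) ≠ 0 := Nat.cast_ne_zero.mpr hb.ne'
  have hD : dedekindS a b
      = ∑ ν ∈ Finset.Ico 1 b, (((a * ν % b : ℕ):ℝ)/b - 1/2) * ((ν:ℝ)/b - 1/2) := by
    unfold dedekindS
    simp only [Int.cast_natCast]
    rw [cot_sum_eq a b ha hb hcop]
    field_simp
    exact Finset.sum_congr rfl fun x _ => by ring
  set g : ℕ := Nat.gcd 3 b with hg
  obtain ⟨w, hw⟩ := dvd_key a b hb
  obtain ⟨e, he⟩ := Nat.even_mul_succ_self (b - 1)
  have hb1 : b - 1 + 1 = b := by omega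
  rw [hb1] at he
  refine ⟨w - g * (∑ ν ∈ Finset.Ico 1 b, ((a * ν % b : ℕ):ℤ))
      - g * (∑ ν ∈ Finset.Ico 1 b, (ν:ℤ)) + g * e, ?_⟩
  rw [hD]
  apply mul_left_cancel₀ (show (4*(b:ℝ)) ≠ 0 by positivity)
  have lhs_eq : (4*(b:ℝ)) * ((2 * b * g) * ∑ ν ∈ Finset.Ico 1 b,
        (((a * ν % b : ℕ):ℝ)/b - 1/2) * ((ν:ℝ)/b - 1/2))
      = ∑ ν ∈ Finset.Ico 1 b,
        (2*(g:ℝ)*(2*((a * ν % b : ℕ):ℝ) - b)*(2*(ν:ℝ) - b)) := by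
    rw [Finset.mul_sum, Finset.mul_sum]
    refine Finset.sum_congr rfl fun ν _ => ?_
    field_simp
    ring
  have int_id : ∑ ν ∈ Finset.Ico 1 b, (2*(g:ℤ)*(2*((a * ν % b : ℕ):ℤ) - b)*(2*(ν:ℤ) - b))
      = 4 * b * (w - g * (∑ ν ∈ Finset.Ico 1 b, ((a * ν % b : ℕ):ℤ))
          - g * (∑ ν ∈ Finset.Ico 1 b, (ν:ℤ)) + g * e) := by
    have heZ : ((b - 1 : ℕ):ℤ) * b = e + e := by exact_mod_cast congrArg (Nat.cast : ℕ → ℤ) he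
    have expand : ∑ ν ∈ Finset.Ico 1 b, (2*(g:ℤ)*(2*((a * ν % b : ℕ):ℤ) - b)*(2*(ν:ℤ) - b))
        = 8*g*(∑ ν ∈ Finset.Ico 1 b, (ν:ℤ) * ((a * ν % b : ℕ):ℤ))
          - 4*g*b*(∑ ν ∈ Finset.Ico 1 b, ((a * ν % b : ℕ):ℤ))
          - 4*g*b*(∑ ν ∈ Finset.Ico 1 b, (ν:ℤ))
          + ((b - 1 : ℕ):ℤ) * (2*g*b^2) := by
      rw [Finset.mul_sum, Finset.mul_sum, Finset.mul_sum]
      rw [← Finset.sum_sub_distrib, ← Finset.sum_sub_distrib]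
      have hconst : ((b - 1 : ℕ):ℤ) * (2*(g:ℤ)*b^2)
          = ∑ _ν ∈ Finset.Ico 1 b, (2*(g:ℤ)*b^2) := by
        rw [Finset.sum_const, Nat.card_Ico, nsmul_eq_mul]
      rw [hconst, ← Finset.sum_add_distrib]
      exact Finset.sum_congr rfl fun ν _ => by ring
    rw [expand]
    linear_combination 4 * hw + 2 * (g:ℤ) * b * heZ
  rw [lhs_eq]
  have := congrArg (Int.cast : ℤ → ℝ) int_id
  exact_mod_cast this
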